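/- Progress at type Idx: if ⊢ M : Idx is derivable for a closed qPCF term M and M ⇓¹ N, then N is a numeral n̄. -/

import Mathlib

set_option maxHeartbeats 1000000

namespace QPCF

-- qPCF terms and types, mutually defined (types contain index terms in `circ`).
mutual
inductive Tm : Type
  | var : ℕ → Tm
  | lam : ℕ → Ty → Tm → Tm
  | app : Tm → Tm → Tm
  | num : ℕ → Tm
  | predOp : Tm
  | succOp : Tm
  | ifOp : Tm
  | fix : Ty → Tm
  | setOp : Tm
  | getOp : Tm
  | gate : ℕ → ℕ → Tm      -- `gate u k` : gate named `u` in 𝒰(k), i.e. of arity k+1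
  | seqOp : Tm              -- sequential composition ∶
  | parOp : Tm              -- parallel composition ∥
  | iterOp : Tm
  | revOp : Tm
  | add : Tm → Tm → Tm      -- index operation +
  | mul : Tm → Tm → Tm      -- index operation *
  | size : Tm → Tm
  | dmeasOp : Tm

inductive Ty : Type
  | nat : Ty
  | idx : Ty
  | circ : Tm → Ty
  | arrow : Ty → Ty → Ty    -- σ → τ  (abbreviation for Πx^σ.τ with x not free in τ)
  | pi : ℕ → Ty → Ty → Ty
end

-- Substitution of term `N` for variable `x` in terms and in types.
mutual
def substTm : Tm → ℕ → Tm → Tm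
  | Tm.var y, x, N => if y = x then N else Tm.var y
  | Tm.lam y σ M, x, N => Tm.lam y (substTy σ x N) (if y = x then M else substTm M x N)
  | Tm.app M₁ M₂, x, N => Tm.app (substTm M₁ x N) (substTm M₂ x N)
  | Tm.num n, _, _ => Tm.num n
  | Tm.predOp, _, _ => Tm.predOp
  | Tm.succOp, _, _ => Tm.succOp
  | Tm.ifOp, _, _ => Tm.ifOp
  | Tm.fix σ, x, N => Tm.fix (substTy σ x N)
  | Tm.setOp, _, _ => Tm.setOp
  | Tm.getOp, _, _ => Tm.getOp
  | Tm.gate u k, _, _ => Tm.gate u k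
  | Tm.seqOp, _, _ => Tm.seqOp
  | Tm.parOp, _, _ => Tm.parOp
  | Tm.iterOp, _, _ => Tm.iterOp
  | Tm.revOp, _, _ => Tm.revOp
  | Tm.add E₀ E₁, x, N => Tm.add (substTm E₀ x N) (substTm E₁ x N)
  | Tm.mul E₀ E₁, x, N => Tm.mul (substTm E₀ x N) (substTm E₁ x N)
  | Tm.size M, x, N => Tm.size (substTm M x N)
  | Tm.dmeasOp, _, _ => Tm.dmeasOp

def substTy : Ty → ℕ → Tm → Ty
  | Ty.nat, _, _ => Ty.nat
  | Ty.idx, _, _ => Ty.idx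
  | Ty.circ E, x, N => Ty.circ (substTm E x N)
  | Ty.arrow σ τ, x, N => Ty.arrow (substTy σ x N) (substTy τ x N)
  | Ty.pi y σ τ, x, N => Ty.pi y (substTy σ x N) (if y = x then τ else substTy τ x N)
end

-- Free variables of terms and types.
mutual
def freeTm : Tm → Finset ℕ
  | Tm.var y => {y}
  | Tm.lam y σ M => freeTy σ ∪ (freeTm M \ {y})
  | Tm.app M₁ M₂ => freeTm M₁ ∪ freeTm M₂
  | Tm.num _ => ∅
  | Tm.predOp => ∅
  | Tm.succOp => ∅
  | Tm.ifOp => ∅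
  | Tm.fix σ => freeTy σ
  | Tm.setOp => ∅
  | Tm.getOp => ∅
  | Tm.gate _ _ => ∅
  | Tm.seqOp => ∅
  | Tm.parOp => ∅
  | Tm.iterOp => ∅
  | Tm.revOp => ∅
  | Tm.add E₀ E₁ => freeTm E₀ ∪ freeTm E₁
  | Tm.mul E₀ E₁ => freeTm E₀ ∪ freeTm E₁
  | Tm.size M => freeTm M
  | Tm.dmeasOp => ∅

def freeTy : Ty → Finset ℕ
  | Ty.nat => ∅
  | Ty.idx => ∅
  | Ty.circ E => freeTm E
  | Ty.arrow σ τ => freeTy σ ∪ freeTy τ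
  | Ty.pi y σ τ => freeTy σ ∪ (freeTy τ \ {y})
end

/-- Bases: finite lists of (variable, type) pairs. -/
abbrev Base := List (ℕ × Ty)

def dom (B : Base) : List ℕ := B.map Prod.fst
def codom (B : Base) : List Ty := B.map Prod.snd
def substBase (B : Base) (x : ℕ) (N : Tm) : Base := B.map fun p => (p.1, substTy p.2 x N)

/-- The function `surf`: collects the typings `B' ⊢ E : Idx` for all index
expressions `E` occurring in Circ-types inside a type. -/
def surfTy : Base → Ty → List (Base × Tm)
  | _, Ty.nat => []
  | _, Ty.idx => []
  | B, Ty.circ E => [(B, E)]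
  | B, Ty.arrow σ τ => surfTy B σ ++ surfTy B τ
  | B, Ty.pi x σ τ => surfTy B σ ++ surfTy ((x, σ) :: B) τ

/-- `surf` extended to a finite set (list) of types. -/
def surfList (B : Base) (l : List Ty) : List (Base × Tm) :=
  (l.map (surfTy B)).flatten

/-- Shape of types admissible for the fixpoint combinator: τ₁ → … → τₙ → γ
with γ ∈ {Nat, Circ E}. -/
inductive YShape : Ty → Prop
  | nat : YShape Ty.nat
  | circ (E : Tm) : YShape (Ty.circ E)
  | arrow (τ σ : Ty) : YShape σ → YShape (Ty.arrow τ σ)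

/-- The typing judgment of qPCF (Table 1). -/
inductive Judg : Base → Tm → Ty → Prop
  | var {B : Base} {x : ℕ} {σ : Ty} :
      (x, σ) ∈ B →
      (∀ p ∈ surfList B (codom B), Judg p.1 p.2 Ty.idx) →
      Judg B (Tm.var x) σ
  | lam {B : Base} {x : ℕ} {σ τ : Ty} {N : Tm} :
      x ∉ dom B → Judg ((x, σ) :: B) N τ →
      Judg B (Tm.lam x σ N) (Ty.pi x σ τ)
  | appPi {B : Base} {P Q : Tm} {x : ℕ} {σ τ : Ty} :
      Judg B P (Ty.pi x σ τ) → Judg B Q σ →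
      Judg B (Tm.app P Q) (substTy τ x Q)
  | appArrow {B : Base} {P Q : Tm} {σ τ : Ty} :
      Judg B P (Ty.arrow σ τ) → Judg B Q σ →
      Judg B (Tm.app P Q) τ
  | succ {B : Base} :
      (∀ p ∈ surfList B (codom B), Judg p.1 p.2 Ty.idx) →
      Judg B Tm.succOp (Ty.arrow Ty.nat Ty.nat)
  | pred {B : Base} :
      (∀ p ∈ surfList B (codom B), Judg p.1 p.2 Ty.idx) →
      Judg B Tm.predOp (Ty.arrow Ty.nat Ty.nat)
  | ifNat {B : Base} :
      (∀ p ∈ surfList B (codom B), Judg p.1 p.2 Ty.idx) →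
      Judg B Tm.ifOp (Ty.arrow Ty.nat (Ty.arrow Ty.nat (Ty.arrow Ty.nat Ty.nat)))
  | ifCirc {B : Base} {E : Tm} :
      Judg B E Ty.idx →
      Judg B Tm.ifOp (Ty.arrow Ty.nat (Ty.arrow (Ty.circ E) (Ty.arrow (Ty.circ E) (Ty.circ E))))
  | fix {B : Base} {σ : Ty} :
      YShape σ →
      (∀ p ∈ surfList B (σ :: codom B), Judg p.1 p.2 Ty.idx) →
      Judg B (Tm.fix σ) (Ty.arrow (Ty.arrow σ σ) σ)
  | get {B : Base} :
      (∀ p ∈ surfList B (codom B), Judg p.1 p.2 Ty.idx) →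
      Judg B Tm.getOp (Ty.arrow Ty.nat (Ty.arrow Ty.nat Ty.nat))
  | set {B : Base} :
      (∀ p ∈ surfList B (codom B), Judg p.1 p.2 Ty.idx) →
      Judg B Tm.setOp (Ty.arrow Ty.nat (Ty.arrow Ty.nat Ty.nat))
  | idxNat {B : Base} {M : Tm} :
      Judg B M Ty.idx → Judg B M Ty.nat
  | num {B : Base} {n : ℕ} :
      (∀ p ∈ surfList B (codom B), Judg p.1 p.2 Ty.idx) →
      Judg B (Tm.num n) Ty.idx
  | add {B : Base} {E₀ E₁ : Tm} :
      Judg B E₀ Ty.idx → Judg B E₁ Ty.idx → Judg B (Tm.add E₀ E₁) Ty.idx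
  | mul {B : Base} {E₀ E₁ : Tm} :
      Judg B E₀ Ty.idx → Judg B E₁ Ty.idx → Judg B (Tm.mul E₀ E₁) Ty.idx
  | size {B : Base} {M E : Tm} :
      Judg B M (Ty.circ E) → Judg B (Tm.size M) Ty.idx
  | gate {B : Base} {u k : ℕ} :
      (∀ p ∈ surfList B (codom B), Judg p.1 p.2 Ty.idx) →
      Judg B (Tm.gate u k) (Ty.circ (Tm.num k))
  | seqOp {B : Base} {E : Tm} :
      Judg B E Ty.idx →
      Judg B Tm.seqOp (Ty.arrow (Ty.circ E) (Ty.arrow (Ty.circ E) (Ty.circ E)))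
  | parOp {B : Base} {E₀ E₁ : Tm} :
      Judg B E₀ Ty.idx → Judg B E₁ Ty.idx →
      Judg B Tm.parOp (Ty.arrow (Ty.circ E₀) (Ty.arrow (Ty.circ E₁)
        (Ty.circ (Tm.add (Tm.add E₀ E₁) (Tm.num 1)))))
  | revOp {B : Base} {E : Tm} :
      Judg B E Ty.idx →
      Judg B Tm.revOp (Ty.arrow (Ty.circ E) (Ty.circ E))
  | iterOp {B : Base} {E₀ E₁ : Tm} {x : ℕ} :
      Judg B E₀ Ty.idx → Judg B E₁ Ty.idx →
      x ∉ dom B → x ∉ freeTm E₀ → x ∉ freeTm E₁ →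
      Judg B Tm.iterOp (Ty.pi x Ty.idx (Ty.arrow (Ty.circ E₀) (Ty.arrow (Ty.circ E₁)
        (Ty.circ (Tm.add E₀ (Tm.mul (Tm.add (Tm.num 1) E₁) (Tm.var x)))))))
  | dmeas {B : Base} {E : Tm} :
      Judg B E Ty.idx →
      Judg B Tm.dmeasOp (Ty.arrow Ty.nat (Ty.arrow (Ty.circ E) Ty.nat))

end QPCF
namespace QPCF

-- Syntactic sugar for applied operators.
def seqC (C₀ C₁ : Tm) : Tm := Tm.app (Tm.app Tm.seqOp C₀) C₁
def parC (C₀ C₁ : Tm) : Tm := Tm.app (Tm.app Tm.parOp C₀) C₁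
def ifC (M L R : Tm) : Tm := Tm.app (Tm.app (Tm.app Tm.ifOp M) L) R
def getC (M N : Tm) : Tm := Tm.app (Tm.app Tm.getOp M) N
def setC (M N : Tm) : Tm := Tm.app (Tm.app Tm.setOp M) N
def revC (M : Tm) : Tm := Tm.app Tm.revOp M
def iterC (E M₀ M₁ : Tm) : Tm := Tm.app (Tm.app (Tm.app Tm.iterOp E) M₀) M₁
def dmeasC (M N : Tm) : Tm := Tm.app (Tm.app Tm.dmeasOp M) N

/-- Iterated application M P₁ … Pₘ. -/
def apps : Tm → List Tm → Tm
  | t, [] => t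
  | t, p :: ps => apps (Tm.app t p) ps

/-- `parN n C₁ C₀` is `C₁ ∥ ⋯ ∥ C₁ ∥ C₀` with `n` copies of `C₁`. -/
def parN : ℕ → Tm → Tm → Tm
  | 0, _, C₀ => C₀
  | n + 1, C₁, C₀ => parC C₁ (parN n C₁ C₀)

/-- (Evaluated) circuits: strings built from gate names, ∶ and ∥. -/
inductive IsCircuit : Tm → Prop
  | gate (u k : ℕ) : IsCircuit (Tm.gate u k)
  | seq {C₀ C₁ : Tm} : IsCircuit C₀ → IsCircuit C₁ → IsCircuit (seqC C₀ C₁)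
  | par {C₀ C₁ : Tm} : IsCircuit C₀ → IsCircuit C₁ → IsCircuit (parC C₀ C₁)

/-- Parameters of the language: the unitary operator associated to each
gate name (of each arity), and the adjoint-renaming `‡` of gate names. -/
structure QParams where
  gU : (u k : ℕ) → Matrix (Fin (2 ^ (k + 1))) (Fin (2 ^ (k + 1))) ℂ
  adj : ℕ → ℕ → ℕ

def kronEquiv (n₀ n₁ : ℕ) :
    Fin (2 ^ (n₀ + 1)) × Fin (2 ^ (n₁ + 1)) ≃ Fin (2 ^ (n₀ + n₁ + 1 + 1)) :=
  finProdFinEquiv.trans (finCongr (by rw [← pow_add]; congr 1; omega))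

/-- `Hilb`: the interpretation of an (evaluated) circuit of arity n+1 as an
operator on the Hilbert space of dimension 2^(n+1), given by the clauses
of Definition 9. -/
inductive HilbRel (P : QParams) :
    (n : ℕ) → Tm → Matrix (Fin (2 ^ (n + 1))) (Fin (2 ^ (n + 1))) ℂ → Prop
  | gate (u k : ℕ) : HilbRel P k (Tm.gate u k) (P.gU u k)
  | seq {n : ℕ} {C₀ C₁ : Tm} {A₀ A₁ : Matrix (Fin (2 ^ (n + 1))) (Fin (2 ^ (n + 1))) ℂ} :
      HilbRel P n C₀ A₀ → HilbRel P n C₁ A₁ →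
      HilbRel P n (seqC C₀ C₁) (A₀ * A₁)
  | par {n₀ n₁ : ℕ} {C₀ C₁ : Tm}
      {A₀ : Matrix (Fin (2 ^ (n₀ + 1))) (Fin (2 ^ (n₀ + 1))) ℂ}
      {A₁ : Matrix (Fin (2 ^ (n₁ + 1))) (Fin (2 ^ (n₁ + 1))) ℂ} :
      HilbRel P n₀ C₀ A₀ → HilbRel P n₁ C₁ A₁ →
      HilbRel P (n₀ + n₁ + 1) (parC C₀ C₁)
        (Matrix.reindex (kronEquiv n₀ n₁) (kronEquiv n₀ n₁)
          (Matrix.kroneckerMap (· * ·) A₀ A₁))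

/-- `circuitEvalRel P n x C i pr`: running the circuit `C` (of arity n+1) on the
basis state determined by `x` and totally measuring yields outcome `i` with
(nonzero) probability `pr`. -/
noncomputable def circuitEvalRel (P : QParams) (n x : ℕ) (C : Tm) (i : ℕ) (pr : ℝ) : Prop :=
  ∃ A, HilbRel P n C A ∧ ∃ hi : i < 2 ^ (n + 1),
    pr = ‖(A.mulVec fun j => if (j : ℕ) = x % 2 ^ (n + 1) then 1 else 0) ⟨i, hi⟩‖ ^ 2
    ∧ 0 < pr

/-- The big-step probabilistic operational semantics of qPCF (Table 2):
`Eval P M α V` formalizes `M ⇓^α V`. -/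
inductive Eval (P : QParams) : Tm → ℝ → Tm → Prop
  | num (n : ℕ) : Eval P (Tm.num n) 1 (Tm.num n)
  | succ {M : Tm} {n : ℕ} {α : ℝ} :
      Eval P M α (Tm.num n) → Eval P (Tm.app Tm.succOp M) α (Tm.num (n + 1))
  | pred {M : Tm} {n : ℕ} {α : ℝ} :
      Eval P M α (Tm.num (n + 1)) → Eval P (Tm.app Tm.predOp M) α (Tm.num n)
  | beta {x : ℕ} {σ : Ty} {M N V : Tm} {Ps : List Tm} {α : ℝ} :
      Eval P (apps (substTm M x N) Ps) α V →
      Eval P (apps (Tm.app (Tm.lam x σ M) N) Ps) α V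
  | ifL {M L R V : Tm} {α α' : ℝ} :
      Eval P M α (Tm.num 0) → Eval P L α' V → Eval P (ifC M L R) (α * α') V
  | ifR {M L R V : Tm} {n : ℕ} {α α' : ℝ} :
      Eval P M α (Tm.num (n + 1)) → Eval P R α' V → Eval P (ifC M L R) (α * α') V
  | fix {σ : Ty} {M V : Tm} {Ps : List Tm} {α : ℝ} :
      Eval P (apps (Tm.app M (Tm.app (Tm.fix σ) M)) Ps) α V →
      Eval P (apps (Tm.app (Tm.fix σ) M) Ps) α V
  | size {M E : Tm} {n : ℕ} {α : ℝ} :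
      Judg [] M (Ty.circ E) → Eval P E α (Tm.num n) →
      Eval P (Tm.size M) α (Tm.num n)
  | add {E₀ E₁ : Tm} {m n : ℕ} {α α' : ℝ} :
      Eval P E₀ α (Tm.num m) → Eval P E₁ α' (Tm.num n) →
      Eval P (Tm.add E₀ E₁) (α * α') (Tm.num (m + n))
  | mul {E₀ E₁ : Tm} {m n : ℕ} {α α' : ℝ} :
      Eval P E₀ α (Tm.num m) → Eval P E₁ α' (Tm.num n) →
      Eval P (Tm.mul E₀ E₁) (α * α') (Tm.num (m * n))
  | get {M N : Tm} {m n : ℕ} {α α' : ℝ} :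
      Eval P M α (Tm.num m) → Eval P N α' (Tm.num n) →
      Eval P (getC M N) (α * α') (Tm.num (m / 2 ^ n % 2))
  | set {M N : Tm} {m n m' : ℕ} {α α' : ℝ} :
      Eval P M α (Tm.num m) → Eval P N α' (Tm.num n) →
      m' / 2 ^ n % 2 = 1 → (∀ k, k ≠ n → m' / 2 ^ k % 2 = m / 2 ^ k % 2) →
      Eval P (setC M N) (α * α') (Tm.num m')
  | gate (u k : ℕ) : Eval P (Tm.gate u k) 1 (Tm.gate u k)
  | seq {M₀ M₁ C₀ C₁ : Tm} {α α' : ℝ} :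
      Eval P M₀ α C₀ → Eval P M₁ α' C₁ →
      Eval P (seqC M₀ M₁) (α * α') (seqC C₀ C₁)
  | par {M₀ M₁ C₀ C₁ : Tm} {α α' : ℝ} :
      Eval P M₀ α C₀ → Eval P M₁ α' C₁ →
      Eval P (parC M₀ M₁) (α * α') (parC C₁ C₀)
  | rev₀ {M : Tm} {u k : ℕ} {α : ℝ} :
      Eval P M α (Tm.gate u k) → Eval P (revC M) α (Tm.gate (P.adj u k) k)
  | rev₁ {M C₀ C₁ C₀' C₁' : Tm} {α α' α'' : ℝ} :
      Eval P M α (seqC C₀ C₁) → Eval P (revC C₀) α' C₀' → Eval P (revC C₁) α'' C₁' →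
      Eval P (revC M) (α * α' * α'') (seqC C₁' C₀')
  | rev₂ {M C₀ C₁ C₀' C₁' : Tm} {α α' α'' : ℝ} :
      Eval P M α (parC C₀ C₁) → Eval P (revC C₀) α' C₀' → Eval P (revC C₁) α'' C₁' →
      Eval P (revC M) (α * α' * α'') (parC C₀' C₁')
  | iter {E M₀ M₁ C₀ C₁ : Tm} {n : ℕ} {α α' α'' : ℝ} :
      Eval P E α (Tm.num n) → Eval P M₀ α' C₀ → Eval P M₁ α'' C₁ →
      Eval P (iterC E M₀ M₁) (α * α' * α'') (parN n C₁ C₀)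
  | dmeas {M N C : Tm} {m k n : ℕ} {α α' α'' : ℝ} :
      Eval P M α (Tm.num m) → Eval P N α' C →
      Judg [] N (Ty.circ (Tm.num k)) →
      circuitEvalRel P k m C n α'' →
      Eval P (dmeasC M N) (α * α' * α'') (Tm.num n)

/-- `M ⇓ V`: there exists an evaluation of `M` to `V` with some probability 0 < α ≤ 1. -/
def EvalSome (P : QParams) (M V : Tm) : Prop := ∃ α : ℝ, 0 < α ∧ α ≤ 1 ∧ Eval P M α V

end QPCF
namespace QPCF

/-- Structural depth of a type (number of arrow/Π constructors). -/
def Ty.depth : Ty → ℕ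
  | Ty.nat => 0
  | Ty.idx => 0
  | Ty.circ _ => 0
  | Ty.arrow σ τ => σ.depth + τ.depth + 1
  | Ty.pi _ σ τ => σ.depth + τ.depth + 1

theorem substTy_depth : ∀ (σ : Ty) (x : ℕ) (N : Tm), (substTy σ x N).depth = σ.depth
  | Ty.nat, _, _ => rfl
  | Ty.idx, _, _ => rfl
  | Ty.circ _, _, _ => rfl
  | Ty.arrow σ τ, x, N => by
      simp [substTy, Ty.depth, substTy_depth σ x N, substTy_depth τ x N]
  | Ty.pi y σ τ, x, N => by
      by_cases h : y = x <;>
        simp [substTy, Ty.depth, h, substTy_depth σ x N, substTy_depth τ x N]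

@[simp] theorem substBase_length (B : Base) (x : ℕ) (N : Tm) :
    (substBase B x N).length = B.length := by
  simp [substBase]

/-- The computability predicate `Comp` (Definition 7). -/
def Comp (P : QParams) : Base → Tm → Ty → Prop
  | [], M, Ty.nat => Judg [] M Ty.nat
  | [], M, Ty.idx => Judg [] M Ty.idx ∧ ∃ n, Eval P M 1 (Tm.num n)
  | [], M, Ty.circ E =>
      Judg [] M (Ty.circ E) ∧ (Judg [] E Ty.idx ∧ ∃ n, Eval P E 1 (Tm.num n))
  | [], M, Ty.arrow μ τ =>
      Judg [] M (Ty.arrow μ τ) ∧ ∀ N, Comp P [] N μ → Comp P [] (Tm.app M N) τ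
  | [], M, Ty.pi x μ τ =>
      Judg [] M (Ty.pi x μ τ) ∧
        ∀ N, Comp P [] N μ → Comp P [] (Tm.app M N) (substTy τ x N)
  | (x, ν) :: B', M, σ =>
      Judg ((x, ν) :: B') M σ ∧
        ∀ N, Comp P [] N ν →
          Comp P (substBase B' x N) (substTm M x N) (substTy σ x N)
termination_by B _ σ => (B.length, Ty.depth σ)
decreasing_by
  · exact Prod.Lex.right _ (by simp [Ty.depth] <;> omega)
  · exact Prod.Lex.right _ (by simp [Ty.depth] <;> omega)
  · exact Prod.Lex.right _ (by simp [Ty.depth] <;> omega)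
  · exact Prod.Lex.right _ (by simp [substTy_depth, Ty.depth] <;> omega)
  · exact Prod.Lex.left _ _ (by simp)
  · exact Prod.Lex.left _ _ (by simp [substBase])

end QPCF
namespace QPCF

/-- `piTelescope [(z₁,τ₁),…,(zₘ,τₘ)] γ` is `Πz₁^τ₁.…Πzₘ^τₘ.γ`. -/
def piTelescope : List (ℕ × Ty) → Ty → Ty
  | [], γ => γ
  | (z, τ) :: rest, γ => Ty.pi z τ (piTelescope rest γ)

/-- Iterated substitution on terms: `M[N₁/x₁]⋯[Nₖ/xₖ]`. -/
def substTmList : Tm → List (ℕ × Tm) → Tm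
  | M, [] => M
  | M, (x, N) :: rest => substTmList (substTm M x N) rest

/-- Iterated substitution on types: `σ[N₁/x₁]⋯[Nₖ/xₖ]`. -/
def substTyList : Ty → List (ℕ × Tm) → Ty
  | σ, [] => σ
  | σ, (x, N) :: rest => substTyList (substTy σ x N) rest

/-- Pair variables with the terms to be substituted for them. -/
def pairSub (xs : List ℕ) (Ns : List Tm) : List (ℕ × Tm) := List.zip xs Ns

/-- qPCF contexts: terms with a single hole. -/
inductive Ctx : Type
  | hole : Ctx
  | lam : ℕ → Ty → Ctx → Ctx
  | appL : Ctx → Tm → Ctx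
  | appR : Tm → Ctx → Ctx
  | addL : Ctx → Tm → Ctx
  | addR : Tm → Ctx → Ctx
  | mulL : Ctx → Tm → Ctx
  | mulR : Tm → Ctx → Ctx
  | size : Ctx → Ctx

/-- Filling the hole of a context with a term. -/
def Ctx.fill : Ctx → Tm → Tm
  | Ctx.hole, M => M
  | Ctx.lam x σ C, M => Tm.lam x σ (C.fill M)
  | Ctx.appL C N, M => Tm.app (C.fill M) N
  | Ctx.appR N C, M => Tm.app N (C.fill M)
  | Ctx.addL C N, M => Tm.add (C.fill M) N
  | Ctx.addR N C, M => Tm.add N (C.fill M)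
  | Ctx.mulL C N, M => Tm.mul (C.fill M) N
  | Ctx.mulR N C, M => Tm.mul N (C.fill M)
  | Ctx.size C, M => Tm.size (C.fill M)

-- Syntactic occurrence of a type inside a type / a term.
mutual
inductive OccTy : Ty → Ty → Prop
  | refl (t : Ty) : OccTy t t
  | circ {t : Ty} {E : Tm} : OccTm t E → OccTy t (Ty.circ E)
  | arrowL {t σ τ : Ty} : OccTy t σ → OccTy t (Ty.arrow σ τ)
  | arrowR {t σ τ : Ty} : OccTy t τ → OccTy t (Ty.arrow σ τ)
  | piL {t σ τ : Ty} {x : ℕ} : OccTy t σ → OccTy t (Ty.pi x σ τ)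
  | piR {t σ τ : Ty} {x : ℕ} : OccTy t τ → OccTy t (Ty.pi x σ τ)

inductive OccTm : Ty → Tm → Prop
  | lamTy {t : Ty} {x : ℕ} {σ : Ty} {M : Tm} : OccTy t σ → OccTm t (Tm.lam x σ M)
  | lamBody {t : Ty} {x : ℕ} {σ : Ty} {M : Tm} : OccTm t M → OccTm t (Tm.lam x σ M)
  | appL {t : Ty} {M N : Tm} : OccTm t M → OccTm t (Tm.app M N)
  | appR {t : Ty} {M N : Tm} : OccTm t N → OccTm t (Tm.app M N)
  | fix {t σ : Ty} : OccTy t σ → OccTm t (Tm.fix σ)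
  | addL {t : Ty} {M N : Tm} : OccTm t M → OccTm t (Tm.add M N)
  | addR {t : Ty} {M N : Tm} : OccTm t N → OccTm t (Tm.add M N)
  | mulL {t : Ty} {M N : Tm} : OccTm t M → OccTm t (Tm.mul M N)
  | mulR {t : Ty} {M N : Tm} : OccTm t N → OccTm t (Tm.mul M N)
  | size {t : Ty} {M : Tm} : OccTm t M → OccTm t (Tm.size M)
end

/-- A type occurs (syntactically) in a typing judgment `B ⊢ M : σ` if it occurs
in some type of the base `B`, in the subject `M`, or in the type `σ`. -/
def OccJudgment (t : Ty) (j : Base × Tm × Ty) : Prop :=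
  (∃ τ ∈ codom j.1, OccTy t τ) ∨ OccTm t j.2.1 ∨ OccTy t j.2.2

/-- `Reach B M σ (B', M', σ')` holds iff some typing derivation concluding
`B ⊢ M : σ` contains a (sub)derivation concluding `B' ⊢ M' : σ'`: it mirrors
the rules of Table 1, descending into one premise. -/
inductive Reach : Base → Tm → Ty → Base × Tm × Ty → Prop
  | here {B : Base} {M : Tm} {σ : Ty} :
      Judg B M σ → Reach B M σ (B, M, σ)
  | var {B : Base} {x : ℕ} {σ : Ty} {q : Base × Tm} {j} :
      (x, σ) ∈ B →
      (∀ p ∈ surfList B (codom B), Judg p.1 p.2 Ty.idx) →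
      q ∈ surfList B (codom B) → Reach q.1 q.2 Ty.idx j →
      Reach B (Tm.var x) σ j
  | lam {B : Base} {x : ℕ} {σ τ : Ty} {N : Tm} {j} :
      x ∉ dom B → Reach ((x, σ) :: B) N τ j →
      Reach B (Tm.lam x σ N) (Ty.pi x σ τ) j
  | appPi₁ {B : Base} {P Q : Tm} {x : ℕ} {σ τ : Ty} {j} :
      Reach B P (Ty.pi x σ τ) j → Judg B Q σ →
      Reach B (Tm.app P Q) (substTy τ x Q) j
  | appPi₂ {B : Base} {P Q : Tm} {x : ℕ} {σ τ : Ty} {j} :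
      Judg B P (Ty.pi x σ τ) → Reach B Q σ j →
      Reach B (Tm.app P Q) (substTy τ x Q) j
  | appArrow₁ {B : Base} {P Q : Tm} {σ τ : Ty} {j} :
      Reach B P (Ty.arrow σ τ) j → Judg B Q σ →
      Reach B (Tm.app P Q) τ j
  | appArrow₂ {B : Base} {P Q : Tm} {σ τ : Ty} {j} :
      Judg B P (Ty.arrow σ τ) → Reach B Q σ j →
      Reach B (Tm.app P Q) τ j
  | succ {B : Base} {q : Base × Tm} {j} :
      (∀ p ∈ surfList B (codom B), Judg p.1 p.2 Ty.idx) →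
      q ∈ surfList B (codom B) → Reach q.1 q.2 Ty.idx j →
      Reach B Tm.succOp (Ty.arrow Ty.nat Ty.nat) j
  | pred {B : Base} {q : Base × Tm} {j} :
      (∀ p ∈ surfList B (codom B), Judg p.1 p.2 Ty.idx) →
      q ∈ surfList B (codom B) → Reach q.1 q.2 Ty.idx j →
      Reach B Tm.predOp (Ty.arrow Ty.nat Ty.nat) j
  | ifNat {B : Base} {q : Base × Tm} {j} :
      (∀ p ∈ surfList B (codom B), Judg p.1 p.2 Ty.idx) →
      q ∈ surfList B (codom B) → Reach q.1 q.2 Ty.idx j →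
      Reach B Tm.ifOp (Ty.arrow Ty.nat (Ty.arrow Ty.nat (Ty.arrow Ty.nat Ty.nat))) j
  | ifCirc {B : Base} {E : Tm} {j} :
      Reach B E Ty.idx j →
      Reach B Tm.ifOp (Ty.arrow Ty.nat (Ty.arrow (Ty.circ E) (Ty.arrow (Ty.circ E) (Ty.circ E)))) j
  | fix {B : Base} {σ : Ty} {q : Base × Tm} {j} :
      YShape σ →
      (∀ p ∈ surfList B (σ :: codom B), Judg p.1 p.2 Ty.idx) →
      q ∈ surfList B (σ :: codom B) → Reach q.1 q.2 Ty.idx j →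
      Reach B (Tm.fix σ) (Ty.arrow (Ty.arrow σ σ) σ) j
  | get {B : Base} {q : Base × Tm} {j} :
      (∀ p ∈ surfList B (codom B), Judg p.1 p.2 Ty.idx) →
      q ∈ surfList B (codom B) → Reach q.1 q.2 Ty.idx j →
      Reach B Tm.getOp (Ty.arrow Ty.nat (Ty.arrow Ty.nat Ty.nat)) j
  | set {B : Base} {q : Base × Tm} {j} :
      (∀ p ∈ surfList B (codom B), Judg p.1 p.2 Ty.idx) →
      q ∈ surfList B (codom B) → Reach q.1 q.2 Ty.idx j →
      Reach B Tm.setOp (Ty.arrow Ty.nat (Ty.arrow Ty.nat Ty.nat)) j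
  | idxNat {B : Base} {M : Tm} {j} :
      Reach B M Ty.idx j → Reach B M Ty.nat j
  | num {B : Base} {n : ℕ} {q : Base × Tm} {j} :
      (∀ p ∈ surfList B (codom B), Judg p.1 p.2 Ty.idx) →
      q ∈ surfList B (codom B) → Reach q.1 q.2 Ty.idx j →
      Reach B (Tm.num n) Ty.idx j
  | add₁ {B : Base} {E₀ E₁ : Tm} {j} :
      Reach B E₀ Ty.idx j → Judg B E₁ Ty.idx → Reach B (Tm.add E₀ E₁) Ty.idx j
  | add₂ {B : Base} {E₀ E₁ : Tm} {j} :
      Judg B E₀ Ty.idx → Reach B E₁ Ty.idx j → Reach B (Tm.add E₀ E₁) Ty.idx j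
  | mul₁ {B : Base} {E₀ E₁ : Tm} {j} :
      Reach B E₀ Ty.idx j → Judg B E₁ Ty.idx → Reach B (Tm.mul E₀ E₁) Ty.idx j
  | mul₂ {B : Base} {E₀ E₁ : Tm} {j} :
      Judg B E₀ Ty.idx → Reach B E₁ Ty.idx j → Reach B (Tm.mul E₀ E₁) Ty.idx j
  | size {B : Base} {M E : Tm} {j} :
      Reach B M (Ty.circ E) j → Reach B (Tm.size M) Ty.idx j
  | gate {B : Base} {u k : ℕ} {q : Base × Tm} {j} :
      (∀ p ∈ surfList B (codom B), Judg p.1 p.2 Ty.idx) →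
      q ∈ surfList B (codom B) → Reach q.1 q.2 Ty.idx j →
      Reach B (Tm.gate u k) (Ty.circ (Tm.num k)) j
  | seqOp {B : Base} {E : Tm} {j} :
      Reach B E Ty.idx j →
      Reach B Tm.seqOp (Ty.arrow (Ty.circ E) (Ty.arrow (Ty.circ E) (Ty.circ E))) j
  | parOp₁ {B : Base} {E₀ E₁ : Tm} {j} :
      Reach B E₀ Ty.idx j → Judg B E₁ Ty.idx →
      Reach B Tm.parOp (Ty.arrow (Ty.circ E₀) (Ty.arrow (Ty.circ E₁)
        (Ty.circ (Tm.add (Tm.add E₀ E₁) (Tm.num 1))))) j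
  | parOp₂ {B : Base} {E₀ E₁ : Tm} {j} :
      Judg B E₀ Ty.idx → Reach B E₁ Ty.idx j →
      Reach B Tm.parOp (Ty.arrow (Ty.circ E₀) (Ty.arrow (Ty.circ E₁)
        (Ty.circ (Tm.add (Tm.add E₀ E₁) (Tm.num 1))))) j
  | revOp {B : Base} {E : Tm} {j} :
      Reach B E Ty.idx j →
      Reach B Tm.revOp (Ty.arrow (Ty.circ E) (Ty.circ E)) j
  | iterOp₁ {B : Base} {E₀ E₁ : Tm} {x : ℕ} {j} :
      Reach B E₀ Ty.idx j → Judg B E₁ Ty.idx →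
      x ∉ dom B → x ∉ freeTm E₀ → x ∉ freeTm E₁ →
      Reach B Tm.iterOp (Ty.pi x Ty.idx (Ty.arrow (Ty.circ E₀) (Ty.arrow (Ty.circ E₁)
        (Ty.circ (Tm.add E₀ (Tm.mul (Tm.add (Tm.num 1) E₁) (Tm.var x))))))) j
  | iterOp₂ {B : Base} {E₀ E₁ : Tm} {x : ℕ} {j} :
      Judg B E₀ Ty.idx → Reach B E₁ Ty.idx j →
      x ∉ dom B → x ∉ freeTm E₀ → x ∉ freeTm E₁ →
      Reach B Tm.iterOp (Ty.pi x Ty.idx (Ty.arrow (Ty.circ E₀) (Ty.arrow (Ty.circ E₁)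
        (Ty.circ (Tm.add E₀ (Tm.mul (Tm.add (Tm.num 1) E₁) (Tm.var x))))))) j
  | dmeas {B : Base} {E : Tm} {j} :
      Reach B E Ty.idx j →
      Reach B Tm.dmeasOp (Ty.arrow Ty.nat (Ty.arrow (Ty.circ E) Ty.nat)) j

end QPCF

namespace QPCF

/- ----------------------------------------------------------------- -/
/- Auxiliary development: simple-type skeletons and progress at Idx. -/
/- ----------------------------------------------------------------- -/

/-- Simple-type skeletons of qPCF types. -/
inductive SType : Type
  | nat | idx | circ
  | arr : SType → SType → SType

/-- Skeleton of a type. -/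
def sk : Ty → SType
  | Ty.nat => .nat
  | Ty.idx => .idx
  | Ty.circ _ => .circ
  | Ty.arrow σ τ => .arr (sk σ) (sk τ)
  | Ty.pi _ σ τ => .arr (sk σ) (sk τ)

theorem sk_subst : ∀ (σ : Ty) (x : ℕ) (N : Tm), sk (substTy σ x N) = sk σ
  | Ty.nat, _, _ => rfl
  | Ty.idx, _, _ => rfl
  | Ty.circ _, _, _ => rfl
  | Ty.arrow σ τ, x, N => by
      simp [substTy, sk, sk_subst σ x N, sk_subst τ x N]
  | Ty.pi y σ τ, x, N => by
      by_cases h : y = x <;>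
        simp [substTy, sk, h, sk_subst σ x N, sk_subst τ x N]

abbrev SBase := List (ℕ × SType)

/-- First-match lookup in a skeleton base. -/
def lookupS : SBase → ℕ → Option SType
  | [], _ => none
  | (y, s) :: B, x => if y = x then some s else lookupS B x

/-- Skeleton typing: no freshness conditions, first-match variable rule,
no surface conditions. -/
inductive SJudg : SBase → Tm → SType → Prop
  | var {B x s} : lookupS B x = some s → SJudg B (Tm.var x) s
  | lam {B x M t} (σ : Ty) :
      SJudg ((x, sk σ) :: B) M t → SJudg B (Tm.lam x σ M) (.arr (sk σ) t)
  | app {B P Q s t} : SJudg B P (.arr s t) → SJudg B Q s → SJudg B (Tm.app P Q) t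
  | succ {B} : SJudg B Tm.succOp (.arr .nat .nat)
  | pred {B} : SJudg B Tm.predOp (.arr .nat .nat)
  | ifNat {B} : SJudg B Tm.ifOp (.arr .nat (.arr .nat (.arr .nat .nat)))
  | ifCirc {B} : SJudg B Tm.ifOp (.arr .nat (.arr .circ (.arr .circ .circ)))
  | fixR {B} (σ : Ty) : SJudg B (Tm.fix σ) (.arr (.arr (sk σ) (sk σ)) (sk σ))
  | getR {B} : SJudg B Tm.getOp (.arr .nat (.arr .nat .nat))
  | setR {B} : SJudg B Tm.setOp (.arr .nat (.arr .nat .nat))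
  | idxNat {B M} : SJudg B M .idx → SJudg B M .nat
  | num {B n} : SJudg B (Tm.num n) .idx
  | add {B E₀ E₁} : SJudg B (Tm.add E₀ E₁) .idx
  | mul {B E₀ E₁} : SJudg B (Tm.mul E₀ E₁) .idx
  | size {B M} : SJudg B (Tm.size M) .idx
  | gate {B u k} : SJudg B (Tm.gate u k) .circ
  | seqO {B} : SJudg B Tm.seqOp (.arr .circ (.arr .circ .circ))
  | parO {B} : SJudg B Tm.parOp (.arr .circ (.arr .circ .circ))
  | revO {B} : SJudg B Tm.revOp (.arr .circ .circ)
  | iterO {B} : SJudg B Tm.iterOp (.arr .idx (.arr .circ (.arr .circ .circ)))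
  | dmeasO {B} : SJudg B Tm.dmeasOp (.arr .nat (.arr .circ .nat))

theorem lookupS_eq_none : ∀ {L : SBase} {x : ℕ}, x ∉ L.map Prod.fst → lookupS L x = none := by
  intro L
  induction L with
  | nil => intro x _; rfl
  | cons p L ih =>
      intro x hx
      obtain ⟨y, s⟩ := p
      simp only [List.map_cons, List.mem_cons, not_or] at hx
      simp only [lookupS, if_neg (fun h : y = x => hx.1 h.symm)]
      exact ih hx.2

theorem lookupS_append_none (L₁ L₂ : SBase) (x : ℕ) (h : lookupS L₁ x = none) :
    lookupS (L₁ ++ L₂) x = lookupS L₂ x := by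
  induction L₁ with
  | nil => rfl
  | cons p L ih =>
      obtain ⟨y, s⟩ := p
      by_cases hyx : y = x
      · simp [lookupS, hyx] at h
      · simp only [List.cons_append, lookupS, if_neg hyx] at h ⊢
        exact ih h

theorem lookupS_append_some (L₁ L₂ : SBase) (x : ℕ) (s : SType)
    (h : lookupS L₁ x = some s) : lookupS (L₁ ++ L₂) x = some s := by
  induction L₁ with
  | nil => simp [lookupS] at h
  | cons p L ih =>
      obtain ⟨y, s'⟩ := p
      by_cases hyx : y = x
      · simp only [List.cons_append, lookupS, if_pos hyx] at h ⊢; exact h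
      · simp only [List.cons_append, lookupS, if_neg hyx] at h ⊢
        exact ih h

/-- Typing only depends on the base via first-match lookup. -/
theorem SJudg.mono : ∀ {B M t}, SJudg B M t →
    ∀ {B' : SBase}, (∀ y ρ, lookupS B y = some ρ → lookupS B' y = some ρ) →
    SJudg B' M t := by
  intro B M t h
  induction h with
  | var hl => exact fun hm => .var (hm _ _ hl)
  | @lam B x M t σ hM ih =>
      intro B' hm
      refine .lam σ (ih ?_)
      intro z ρ hz
      by_cases hxz : x = z
      · simpa [lookupS, hxz] using hz
      · simp only [lookupS, if_neg hxz] at hz ⊢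
        exact hm _ _ hz
  | app h1 h2 ih1 ih2 => exact fun hm => .app (ih1 hm) (ih2 hm)
  | succ => exact fun _ => .succ
  | pred => exact fun _ => .pred
  | ifNat => exact fun _ => .ifNat
  | ifCirc => exact fun _ => .ifCirc
  | fixR σ => exact fun _ => .fixR σ
  | getR => exact fun _ => .getR
  | setR => exact fun _ => .setR
  | idxNat h ih => exact fun hm => .idxNat (ih hm)
  | num => exact fun _ => .num
  | add => exact fun _ => .add
  | mul => exact fun _ => .mul
  | size => exact fun _ => .size
  | gate => exact fun _ => .gate
  | seqO => exact fun _ => .seqO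
  | parO => exact fun _ => .parO
  | revO => exact fun _ => .revO
  | iterO => exact fun _ => .iterO
  | dmeasO => exact fun _ => .dmeasO

theorem SJudg.weaken {M t} (h : SJudg [] M t) (L : SBase) : SJudg L M t :=
  h.mono (by intro y ρ hy; simp [lookupS] at hy)

/-- Substitution lemma for skeleton typing. -/
theorem subst_sjudg (x : ℕ) (s : SType) (N : Tm) (hN : SJudg [] N s) :
    ∀ {B M t}, SJudg B M t → ∀ L : SBase, B = L ++ [(x, s)] →
      x ∉ L.map Prod.fst → SJudg L (substTm M x N) t := by
  intro B M t h
  induction h with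
  | @var B y t hl =>
      intro L hB hx
      subst hB
      by_cases hyx : y = x
      · subst hyx
        have h1 : lookupS L y = none := lookupS_eq_none hx
        have h2 : lookupS (L ++ [(y, s)]) y = some s := by
          rw [lookupS_append_none _ _ _ h1]; simp [lookupS]
        rw [hl] at h2
        have hts := Option.some.inj h2
        subst hts
        simpa [substTm] using hN.weaken L
      · have h1 : lookupS L y = some t := by
          rcases h2 : lookupS L y with _ | s'
          · rw [lookupS_append_none _ _ _ h2] at hl
            simp only [lookupS, if_neg (fun h : x = y => hyx h.symm)] at hl
            exact hl
          · rw [lookupS_append_some _ _ _ _ h2] at hl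
            exact hl
        simp only [substTm, if_neg hyx]
        exact .var h1
  | @lam B y M t σ hM ih =>
      intro L hB hx
      subst hB
      by_cases hyx : y = x
      · subst hyx
        have hM' : SJudg ((y, sk σ) :: L) M t := by
          refine SJudg.mono hM ?_
          intro z ρ hz
          by_cases hz' : y = z
          · simpa [lookupS, hz'] using hz
          · simp only [lookupS, if_neg hz'] at hz ⊢
            rcases h2 : lookupS L z with _ | s'
            · rw [lookupS_append_none _ _ _ h2] at hz
              simp only [lookupS, if_neg hz'] at hz
              exact hz
            · rw [lookupS_append_some _ _ _ _ h2] at hz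
              exact hz
        have hM'' : SJudg ((y, sk (substTy σ y N)) :: L) M t := by
          rw [sk_subst]; exact hM'
        have hout := SJudg.lam (substTy σ y N) hM''
        simp only [substTm, if_pos rfl]
        simpa [sk_subst] using hout
      · have hx' : x ∉ ((y, sk σ) :: L).map Prod.fst := by
          simp only [List.map_cons, List.mem_cons]
          rintro (h | h)
          · exact hyx h.symm
          · exact hx h
        have hM' := ih ((y, sk σ) :: L) (by simp) hx'
        have hM'' : SJudg ((y, sk (substTy σ x N)) :: L) (substTm M x N) t := by
          rw [sk_subst]; exact hM'
        have hout := SJudg.lam (substTy σ x N) hM''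
        simp only [substTm, if_neg hyx]
        simpa [sk_subst] using hout
  | app h1 h2 ih1 ih2 =>
      intro L hB hx
      simpa [substTm] using SJudg.app (ih1 L hB hx) (ih2 L hB hx)
  | succ => intro L _ _; simpa [substTm] using SJudg.succ (B := L)
  | pred => intro L _ _; simpa [substTm] using SJudg.pred (B := L)
  | ifNat => intro L _ _; simpa [substTm] using SJudg.ifNat (B := L)
  | ifCirc => intro L _ _; simpa [substTm] using SJudg.ifCirc (B := L)
  | fixR σ =>
      intro L _ _
      have h0 := SJudg.fixR (B := L) (substTy σ x N)
      simp only [substTm]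
      simpa [sk_subst] using h0
  | getR => intro L _ _; simpa [substTm] using SJudg.getR (B := L)
  | setR => intro L _ _; simpa [substTm] using SJudg.setR (B := L)
  | idxNat h ih => exact fun L hB hx => .idxNat (ih L hB hx)
  | num => intro L _ _; simpa [substTm] using SJudg.num (B := L)
  | add => intro L _ _; simpa [substTm] using SJudg.add (B := L)
  | mul => intro L _ _; simpa [substTm] using SJudg.mul (B := L)
  | size => intro L _ _; simpa [substTm] using SJudg.size (B := L)
  | gate => intro L _ _; simpa [substTm] using SJudg.gate (B := L)
  | seqO => intro L _ _; simpa [substTm] using SJudg.seqO (B := L)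
  | parO => intro L _ _; simpa [substTm] using SJudg.parO (B := L)
  | revO => intro L _ _; simpa [substTm] using SJudg.revO (B := L)
  | iterO => intro L _ _; simpa [substTm] using SJudg.iterO (B := L)
  | dmeasO => intro L _ _; simpa [substTm] using SJudg.dmeasO (B := L)

/-- Implicit coercion Idx ≤ Nat. -/
def SubT (a b : SType) : Prop := a = b ∨ (a = .idx ∧ b = .nat)

theorem SubT.coerce {B M a b} (hs : SubT a b) (h : SJudg B M a) : SJudg B M b := by
  rcases hs with rfl | ⟨rfl, rfl⟩
  · exact h
  · exact .idxNat h

theorem appInv : ∀ {B R t}, SJudg B R t → ∀ {Pa Q : Tm}, R = Tm.app Pa Q →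
    ∃ s t', SJudg B Pa (.arr s t') ∧ SJudg B Q s ∧ SubT t' t := by
  intro B R t h
  induction h <;> intro Pa Q hEq
  case app h1 h2 ih1 ih2 =>
    cases hEq
    exact ⟨_, _, h1, h2, Or.inl rfl⟩
  case idxNat h ih =>
    subst hEq
    obtain ⟨s, t', h1, h2, hs⟩ := ih rfl
    have ht' : t' = .idx := by
      rcases hs with rfl | ⟨rfl, hb⟩
      · rfl
      · exact absurd hb (by simp)
    subst ht'
    exact ⟨s, _, h1, h2, Or.inr ⟨rfl, rfl⟩⟩
  all_goals simp at hEq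

theorem lamInv : ∀ {B R u}, SJudg B R u → ∀ {x : ℕ} {σ : Ty} {M : Tm}, R = Tm.lam x σ M →
    ∃ t, u = .arr (sk σ) t ∧ SJudg ((x, sk σ) :: B) M t := by
  intro B R u h
  induction h <;> intro x σ M hEq
  case lam σ' hM ih =>
    cases hEq
    exact ⟨_, rfl, hM⟩
  case idxNat h ih =>
    subst hEq
    obtain ⟨t, ht, _⟩ := ih rfl
    exact absurd ht (by simp)
  all_goals simp at hEq

theorem fixInv {B σ u} (h : SJudg B (Tm.fix σ) u) :
    u = .arr (.arr (sk σ) (sk σ)) (sk σ) := by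
  cases h with
  | fixR => rfl
  | idxNat h' => cases h'

theorem seqOpInv {B t} (h : SJudg B Tm.seqOp t) : t = .arr .circ (.arr .circ .circ) := by
  cases h with
  | seqO => rfl
  | idxNat h' => cases h'

theorem parOpInv {B t} (h : SJudg B Tm.parOp t) : t = .arr .circ (.arr .circ .circ) := by
  cases h with
  | parO => rfl
  | idxNat h' => cases h'

theorem revOpInv {B t} (h : SJudg B Tm.revOp t) : t = .arr .circ .circ := by
  cases h with
  | revO => rfl
  | idxNat h' => cases h'

theorem iterOpInv {B t} (h : SJudg B Tm.iterOp t) :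
    t = .arr .idx (.arr .circ (.arr .circ .circ)) := by
  cases h with
  | iterO => rfl
  | idxNat h' => cases h'

theorem ifOpInv {B t} (h : SJudg B Tm.ifOp t) :
    t = .arr .nat (.arr .nat (.arr .nat .nat)) ∨
    t = .arr .nat (.arr .circ (.arr .circ .circ)) := by
  cases h with
  | ifNat => exact Or.inl rfl
  | ifCirc => exact Or.inr rfl
  | idxNat h' => cases h'

theorem gateIdx {B u k} (h : SJudg B (Tm.gate u k) SType.idx) : False := by
  cases h

theorem appIdx {B P Q} (h : SJudg B (Tm.app P Q) SType.idx) :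
    ∃ s, SJudg B P (.arr s .idx) ∧ SJudg B Q s := by
  obtain ⟨s, t', h1, h2, hs⟩ := appInv h rfl
  have ht' : t' = .idx := by
    rcases hs with rfl | ⟨rfl, hb⟩
    · rfl
    · exact absurd hb (by simp)
  subst ht'
  exact ⟨s, h1, h2⟩

theorem appArrInv {B P Q a b} (h : SJudg B (Tm.app P Q) (SType.arr a b)) :
    ∃ s, SJudg B P (.arr s (.arr a b)) ∧ SJudg B Q s := by
  obtain ⟨s, t', h1, h2, hs⟩ := appInv h rfl
  have ht' : t' = .arr a b := by
    rcases hs with rfl | ⟨rfl, hb⟩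
    · rfl
    · exact absurd hb (by simp)
  subst ht'
  exact ⟨s, h1, h2⟩

/-- Replacing the head of an application spine by a term of the same types. -/
theorem spine : ∀ (Ps : List Tm) (Pa Pb : Tm),
    (∀ u, SJudg [] Pa u → SJudg [] Pb u) →
    ∀ t, SJudg [] (apps Pa Ps) t → SJudg [] (apps Pb Ps) t := by
  intro Ps
  induction Ps with
  | nil => exact fun Pa Pb h t ht => h t ht
  | cons Q Ps ih =>
      intro Pa Pb h t ht
      simp only [apps] at ht ⊢
      refine ih _ _ ?_ t ht
      intro u hu
      obtain ⟨s, t', h1, h2, hs⟩ := appInv hu rfl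
      exact hs.coerce (SJudg.app (h _ h1) h2)

/-- Subject reduction for β at the head. -/
theorem headBeta {x σ M N} :
    ∀ u, SJudg [] (Tm.app (Tm.lam x σ M) N) u → SJudg [] (substTm M x N) u := by
  intro u hu
  obtain ⟨s, t', h1, h2, hs⟩ := appInv hu rfl
  obtain ⟨t2, hEq, hM⟩ := lamInv h1 rfl
  cases hEq
  exact hs.coerce (subst_sjudg x (sk σ) N h2 hM [] rfl (by simp))

/-- Subject reduction for fixpoint unfolding at the head. -/
theorem headFix {σ F} :
    ∀ u, SJudg [] (Tm.app (Tm.fix σ) F) u →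
      SJudg [] (Tm.app F (Tm.app (Tm.fix σ) F)) u := by
  intro u hu
  obtain ⟨s, t', h1, h2, hs⟩ := appInv hu rfl
  have hEq := fixInv h1
  cases hEq
  exact hs.coerce (SJudg.app h2 (SJudg.app h1 h2))

/-- Skeleton erasure of the qPCF typing judgment. -/
def skBase (B : Base) : SBase := B.map fun p => (p.1, sk p.2)

theorem lookup_skBase : ∀ {B : Base} {x σ}, (dom B).Nodup → (x, σ) ∈ B →
    lookupS (skBase B) x = some (sk σ) := by
  intro B
  induction B with
  | nil => intro x σ _ h; simp at h
  | cons p B ih =>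
      intro x σ hnd hm
      obtain ⟨y, ρ⟩ := p
      simp only [dom, List.map_cons, List.nodup_cons] at hnd
      rcases List.mem_cons.mp hm with h | h
      · cases h
        simp [skBase, lookupS]
      · have hxy : y ≠ x := by
          rintro rfl
          exact hnd.1 (List.mem_map.mpr ⟨(y, σ), h, rfl⟩)
        simp only [skBase, List.map_cons, lookupS, if_neg hxy]
        exact ih (by simpa [dom] using hnd.2) h

theorem erase : ∀ {B M τ}, Judg B M τ → (dom B).Nodup → SJudg (skBase B) M (sk τ) := by
  intro B M τ h
  induction h with
  | var hmem hsurf ih => exact fun hnd => .var (lookup_skBase hnd hmem)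
  | @lam B x σ τ N hx hN ih =>
      intro hnd
      have hnd' : (dom ((x, σ) :: B)).Nodup := by
        simp only [dom, List.map_cons, List.nodup_cons]
        exact ⟨by simpa [dom] using hx, by simpa [dom] using hnd⟩
      exact SJudg.lam σ (ih hnd')
  | appPi hP hQ ihP ihQ =>
      intro hnd
      rw [sk_subst]
      exact SJudg.app (ihP hnd) (ihQ hnd)
  | appArrow hP hQ ihP ihQ => exact fun hnd => SJudg.app (ihP hnd) (ihQ hnd)
  | succ hsurf ih => exact fun _ => .succ
  | pred hsurf ih => exact fun _ => .pred
  | ifNat hsurf ih => exact fun _ => .ifNat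
  | ifCirc hE ihE => exact fun _ => .ifCirc
  | fix hsh hsurf ih => exact fun _ => SJudg.fixR _
  | get hsurf ih => exact fun _ => .getR
  | set hsurf ih => exact fun _ => .setR
  | idxNat h ih => exact fun hnd => .idxNat (ih hnd)
  | num hsurf ih => exact fun _ => .num
  | add h0 h1 ih0 ih1 => exact fun _ => .add
  | mul h0 h1 ih0 ih1 => exact fun _ => .mul
  | size h ih => exact fun _ => .size
  | gate hsurf ih => exact fun _ => .gate
  | seqOp h ih => exact fun _ => .seqO
  | parOp h0 h1 ih0 ih1 => exact fun _ => .parO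
  | revOp h ih => exact fun _ => .revO
  | iterOp h0 h1 hx he0 he1 ih0 ih1 => exact fun _ => .iterO
  | dmeas h ih => exact fun _ => .dmeasO

/-- Progress at Idx, by induction on the evaluation relation. -/
theorem evalAux (P : QParams) : ∀ {M α N}, Eval P M α N →
    SJudg [] M SType.idx → ∃ n : ℕ, N = Tm.num n := by
  intro M α N he
  induction he with
  | num n => exact fun _ => ⟨n, rfl⟩
  | succ h ih => exact fun _ => ⟨_, rfl⟩
  | pred h ih => exact fun _ => ⟨_, rfl⟩
  | beta h ih =>
      intro hT
      exact ih (spine _ _ _ headBeta _ hT)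
  | ifL h1 h2 ih1 ih2 =>
      intro hT
      exfalso
      simp only [ifC] at hT
      obtain ⟨a, hA, _⟩ := appIdx hT
      obtain ⟨b, hB, _⟩ := appArrInv hA
      obtain ⟨c, hC, _⟩ := appArrInv hB
      rcases ifOpInv hC with hE | hE <;> simp at hE
  | ifR h1 h2 ih1 ih2 =>
      intro hT
      exfalso
      simp only [ifC] at hT
      obtain ⟨a, hA, _⟩ := appIdx hT
      obtain ⟨b, hB, _⟩ := appArrInv hA
      obtain ⟨c, hC, _⟩ := appArrInv hB
      rcases ifOpInv hC with hE | hE <;> simp at hE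
  | fix h ih =>
      intro hT
      exact ih (spine _ _ _ headFix _ hT)
  | size hJ hE ih => exact fun _ => ⟨_, rfl⟩
  | add h0 h1 ih0 ih1 => exact fun _ => ⟨_, rfl⟩
  | mul h0 h1 ih0 ih1 => exact fun _ => ⟨_, rfl⟩
  | get h0 h1 ih0 ih1 => exact fun _ => ⟨_, rfl⟩
  | set h0 h1 hm hk ih0 ih1 => exact fun _ => ⟨_, rfl⟩
  | gate u k => intro hT; exact absurd hT (fun h => gateIdx h)
  | seq h0 h1 ih0 ih1 =>
      intro hT
      exfalso
      simp only [seqC] at hT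
      obtain ⟨a, hA, _⟩ := appIdx hT
      obtain ⟨b, hB, _⟩ := appArrInv hA
      have hE := seqOpInv hB
      simp at hE
  | par h0 h1 ih0 ih1 =>
      intro hT
      exfalso
      simp only [parC] at hT
      obtain ⟨a, hA, _⟩ := appIdx hT
      obtain ⟨b, hB, _⟩ := appArrInv hA
      have hE := parOpInv hB
      simp at hE
  | rev₀ h ih =>
      intro hT
      exfalso
      simp only [revC] at hT
      obtain ⟨a, hA, _⟩ := appIdx hT
      have hE := revOpInv hA
      simp at hE
  | rev₁ h0 h1 h2 ih0 ih1 ih2 =>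
      intro hT
      exfalso
      simp only [revC] at hT
      obtain ⟨a, hA, _⟩ := appIdx hT
      have hE := revOpInv hA
      simp at hE
  | rev₂ h0 h1 h2 ih0 ih1 ih2 =>
      intro hT
      exfalso
      simp only [revC] at hT
      obtain ⟨a, hA, _⟩ := appIdx hT
      have hE := revOpInv hA
      simp at hE
  | iter h0 h1 h2 ih0 ih1 ih2 =>
      intro hT
      exfalso
      simp only [iterC] at hT
      obtain ⟨a, hA, _⟩ := appIdx hT
      obtain ⟨b, hB, _⟩ := appArrInv hA
      obtain ⟨c, hC, _⟩ := appArrInv hB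
      have hE := iterOpInv hC
      simp at hE
  | dmeas h0 h1 hJ hc ih0 ih1 => exact fun _ => ⟨_, rfl⟩


/-- Corollary 2, Progress at Idx: if ⊢ M : Idx and M ⇓¹ N
then N is a numeral. -/
theorem idx_progress (P : QParams) (M N : Tm)
    (h : Judg [] M Ty.idx) (he : Eval P M 1 N) : ∃ n : ℕ, N = Tm.num n := by
  have h0 : SJudg [] M SType.idx := erase h (by simp [dom])
  exact evalAux P he h0

end QPCF
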